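/- arXiv:2306.08312 — 2 statements merged into one kernel-verified Lean document; each statement's English description precedes it below -/
import Mathlib

section
/- Let t ≤ T, x ≥ 0 and let v : [t,T] → ℝ be continuous with v(t) = 0. Suppose (X₁, L₁) and (X₂, L₂) are both pairs of continuous functions on [t,T] such that for k = 1,2: X_k(s) = x + v(s) + L_k(s), X_k(s) ≥ 0 for all s, L_k is nondecreasing with L_k(t) = 0, and ∫_t^T X_k(s) dL_k(s) = 0. Then X₁ = X₂ and L₁ = L₂, and moreover L₁(s) = max(0, sup_{r∈[t,s]} (−v(r)) − x) for all s ∈ [t,T]. -/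
open Set Filter Topology

lemma skorokhod_key (t T x : ℝ) (htT : t ≤ T) (hx : 0 ≤ x)
    (v X L : ℝ → ℝ) (hLc : ContinuousOn L (Set.Icc t T))
    (hX : ∀ s ∈ Set.Icc t T, X s = x + v s + L s)
    (hX0 : ∀ s ∈ Set.Icc t T, 0 ≤ X s)
    (hLm : MonotoneOn L (Set.Icc t T)) (hLt : L t = 0)
    (hflat : ∀ s₁ ∈ Set.Icc t T, ∀ s₂ ∈ Set.Icc t T, s₁ ≤ s₂ →
      (∀ s ∈ Set.Icc s₁ s₂, 0 < X s) → L s₂ = L s₁) :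
    ∀ s ∈ Set.Icc t T, L s = max 0 (sSup ((fun r => -v r) '' Set.Icc t s) - x) := by
  intro s hs
  obtain ⟨hts, hsT⟩ := hs
  have hsub : Icc t s ⊆ Icc t T := Icc_subset_Icc le_rfl hsT
  have hLs0 : 0 ≤ L s := by
    rw [← hLt]; exact hLm ⟨le_rfl, htT⟩ ⟨hts, hsT⟩ hts
  set S := sSup ((fun r => -v r) '' Icc t s) with hS
  have hbound : ∀ r ∈ Icc t s, -v r ≤ x + L s := by
    intro r hr
    have hrT := hsub hr
    have h0 := hX0 r hrT
    rw [hX r hrT] at h0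
    have : L r ≤ L s := hLm hrT ⟨hts, hsT⟩ hr.2
    linarith
  have hbdd : BddAbove ((fun r => -v r) '' Icc t s) :=
    ⟨x + L s, by rintro _ ⟨r, hr, rfl⟩; exact hbound r hr⟩
  have hSle : S ≤ x + L s :=
    Real.sSup_le (by rintro _ ⟨r, hr, rfl⟩; exact hbound r hr) (by linarith)
  have h1 : max 0 (S - x) ≤ L s := max_le hLs0 (by linarith)
  rcases le_or_gt (L s) (max 0 (S - x)) with h | h
  · exact le_antisymm h h1
  exfalso
  set M := max 0 (S - x) with hM
  have hM0 : 0 ≤ M := le_max_left _ _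
  have hMS : S - x ≤ M := le_max_right _ _
  set A := Icc t s ∩ L ⁻¹' (Iic M) with hA
  have htA : t ∈ A := ⟨⟨le_rfl, hts⟩, by simp [hLt, hM0]⟩
  have hAne : A.Nonempty := ⟨t, htA⟩
  have hAbdd : BddAbove A := ⟨s, fun r hr => hr.1.2⟩
  have hAclosed : IsClosed A :=
    (hLc.mono hsub).preimage_isClosed_of_isClosed isClosed_Icc isClosed_Iic
  set u := sSup A with hu
  have huA : u ∈ A := hAclosed.csSup_mem hAne hAbdd
  have huIcc : u ∈ Icc t s := huA.1
  have hLuM : L u ≤ M := huA.2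
  have hus : u < s := by
    rcases lt_or_eq_of_le huIcc.2 with h' | h'
    · exact h'
    · exfalso; rw [h'] at hLuM; linarith
  -- positivity of X on Ioc u s
  have hpos : ∀ r ∈ Ioc u s, 0 < X r := by
    intro r hr
    have hrIcc : r ∈ Icc t s := ⟨le_trans huIcc.1 hr.1.le, hr.2⟩
    have hrA : r ∉ A := fun hrA => absurd (le_csSup hAbdd hrA) (not_le.mpr hr.1)
    have hLr : M < L r := lt_of_not_ge (fun hc => hrA ⟨hrIcc, hc⟩)
    have hvS : -v r ≤ S := le_csSup hbdd ⟨r, hrIcc, rfl⟩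
    rw [hX r (hsub hrIcc)]
    linarith
  -- find r₀ ∈ Ioc u s with L r₀ < L s
  have hLuLs : L u < L s := lt_of_le_of_lt hLuM h
  have hcont : ContinuousWithinAt L (Ioc u s) u :=
    (hLc u (hsub huIcc)).mono (fun r hr => hsub ⟨le_trans huIcc.1 hr.1.le, hr.2⟩)
  have heq : 𝓝[Ioc u s] u = 𝓝[>] u := by
    rw [← Ioi_inter_Iic,
      nhdsWithin_inter_of_mem' (mem_nhdsWithin_of_mem_nhds (Iic_mem_nhds hus))]
  have hne : (𝓝[Ioc u s] u).NeBot := by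
    rw [heq]; exact nhdsGT_neBot_of_exists_gt ⟨s, hus⟩
  have hev : ∀ᶠ r in 𝓝[Ioc u s] u, L r < L s :=
    hcont.eventually_lt continuousWithinAt_const hLuLs
  have hmem : ∀ᶠ r in 𝓝[Ioc u s] u, r ∈ Ioc u s := self_mem_nhdsWithin
  obtain ⟨r₀, hr₀L, hr₀⟩ := (hev.and hmem).exists
  have hr₀T : r₀ ∈ Icc t T :=
    ⟨le_trans huIcc.1 hr₀.1.le, le_trans hr₀.2 hsT⟩
  have := hflat r₀ hr₀T s ⟨hts, hsT⟩ hr₀.2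
    (fun r hr => hpos r ⟨lt_of_lt_of_le hr₀.1 hr.1, hr.2⟩)
  linarith

theorem stmt3 (t T x : ℝ) (htT : t ≤ T) (hx : 0 ≤ x)
    (v : ℝ → ℝ) (hv : ContinuousOn v (Set.Icc t T)) (hvt : v t = 0)
    (X₁ L₁ X₂ L₂ : ℝ → ℝ)
    (hX₁c : ContinuousOn X₁ (Set.Icc t T)) (hL₁c : ContinuousOn L₁ (Set.Icc t T))
    (hX₂c : ContinuousOn X₂ (Set.Icc t T)) (hL₂c : ContinuousOn L₂ (Set.Icc t T))
    (hX₁ : ∀ s ∈ Set.Icc t T, X₁ s = x + v s + L₁ s)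
    (hX₂ : ∀ s ∈ Set.Icc t T, X₂ s = x + v s + L₂ s)
    (hX₁0 : ∀ s ∈ Set.Icc t T, 0 ≤ X₁ s)
    (hX₂0 : ∀ s ∈ Set.Icc t T, 0 ≤ X₂ s)
    (hL₁m : MonotoneOn L₁ (Set.Icc t T)) (hL₂m : MonotoneOn L₂ (Set.Icc t T))
    (hL₁t : L₁ t = 0) (hL₂t : L₂ t = 0)
    -- ∫_t^T X_k dL_k = 0 : L_k is constant on any subinterval where X_k > 0
    (hflat₁ : ∀ s₁ ∈ Set.Icc t T, ∀ s₂ ∈ Set.Icc t T, s₁ ≤ s₂ →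
      (∀ s ∈ Set.Icc s₁ s₂, 0 < X₁ s) → L₁ s₂ = L₁ s₁)
    (hflat₂ : ∀ s₁ ∈ Set.Icc t T, ∀ s₂ ∈ Set.Icc t T, s₁ ≤ s₂ →
      (∀ s ∈ Set.Icc s₁ s₂, 0 < X₂ s) → L₂ s₂ = L₂ s₁) :
    ∀ s ∈ Set.Icc t T,
      X₁ s = X₂ s ∧ L₁ s = L₂ s ∧
      L₁ s = max 0 (sSup ((fun r => -v r) '' Set.Icc t s) - x) := by
  intro s hs
  have k1 := skorokhod_key t T x htT hx v X₁ L₁ hL₁c hX₁ hX₁0 hL₁m hL₁t hflat₁ s hs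
  have k2 := skorokhod_key t T x htT hx v X₂ L₂ hL₂c hX₂ hX₂0 hL₂m hL₂t hflat₂ s hs
  have hL : L₁ s = L₂ s := k1.trans k2.symm
  refine ⟨?_, hL, k1⟩
  rw [hX₁ s hs, hX₂ s hs, hL]
end

section
/- Let (Ω, F, P) be a probability space, t ≤ T, c ≠ 0. Let L : [t,T] × Ω → [0,∞) be a stochastic process with continuous nondecreasing paths and L_t = 0, and let Y : [t,T] × Ω → ℝ be a stochastic process with continuous paths such that the σ-algebras generated by (L_s)_{s∈[t,T]} and (Y_s)_{s∈[t,T]} are independent. Assume E[e^{3|c| L_T}] < ∞ and E[sup_{s∈[t,T]} |Y_s|³] < ∞. Then E[∫_t^T Y_s d(e^{c L_s})] = ∫_t^T E[Y_s] d(E[e^{c L_s}]), where the inner integrals are pathwise Riemann–Stieltjes integrals and the function s ↦ E[e^{c L_s}] is monotone so the right-hand Stieltjes integral is well defined. -/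
open Filter Finset MeasureTheory ProbabilityTheory

/-- Riemann–Stieltjes sum of `g` against the integrator `h` over the uniform partition
`s_k = t + (T−t)k/n` of `[t,T]`, with evaluation at the right endpoints. -/
noncomputable def RSsum (t T : ℝ) (n : ℕ) (g h : ℝ → ℝ) : ℝ :=
  ∑ k ∈ Finset.range n,
    g (t + (T - t) * (k + 1) / n) *
      (h (t + (T - t) * (k + 1) / n) - h (t + (T - t) * k / n))

namespace RSaux

lemma sum_range_mul'' {M : Type*} [AddCommMonoid M] (F : ℕ → M) (n m : ℕ) :
    ∑ j ∈ Finset.range (n * m), F j = ∑ k ∈ Finset.range n, ∑ i ∈ Finset.range m, F (k * m + i) := by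
  induction n with
  | zero => simp
  | succ n ih =>
    rw [Nat.succ_mul, Finset.sum_range_add, ih, Finset.sum_range_succ]


lemma mem_p (t T : ℝ) (htT : t ≤ T) (n k : ℕ) (hk : k ≤ n) :
    t + (T - t) * k / n ∈ Set.Icc t T := by
  rcases Nat.eq_zero_or_pos n with h0 | hn
  · subst h0
    simp [Nat.le_zero.mp hk, htT]
  · have hn' : (0:ℝ) < n := by exact_mod_cast hn
    have hk' : (k:ℝ) ≤ n := by exact_mod_cast hk
    have h1 : (0:ℝ) ≤ (T - t) * k / n :=
      div_nonneg (mul_nonneg (by linarith) (Nat.cast_nonneg k)) hn'.le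
    have h2 : (T - t) * k / n ≤ T - t := by
      rw [div_le_iff₀ hn']
      nlinarith [sub_nonneg.mpr htT]
    exact ⟨by linarith, by linarith⟩


lemma p_mono (t T : ℝ) (htT : t ≤ T) (n : ℕ) {k k' : ℕ} (hk : k ≤ k') :
    t + (T - t) * k / n ≤ t + (T - t) * k' / n := by
  have hk' : (k:ℝ) ≤ k' := by exact_mod_cast hk
  gcongr


lemma rs_refine (t T : ℝ) (g h : ℝ → ℝ) (n m : ℕ) (hn : 0 < n) (hm : 0 < m) :
    RSsum t T n g h = ∑ j ∈ Finset.range (n * m),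
      g (t + (T - t) * (↑(m * (j / m + 1)) : ℝ) / ↑(n * m)) *
        (h (t + (T - t) * (↑(j + 1) : ℝ) / ↑(n * m)) - h (t + (T - t) * (↑j : ℝ) / ↑(n * m))) := by
  have hn' : ((n:ℝ)) ≠ 0 := Nat.cast_ne_zero.mpr hn.ne'
  have hm' : ((m:ℝ)) ≠ 0 := Nat.cast_ne_zero.mpr hm.ne'
  set q : ℕ → ℝ := fun i => t + (T - t) * (i : ℝ) / (↑(n * m) : ℝ) with hqdef
  have hq : ∀ a : ℕ, q (a * m) = t + (T - t) * (a : ℝ) / (n : ℝ) := by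
    intro a
    rw [hqdef]
    push_cast
    field_simp
  show RSsum t T n g h
      = ∑ j ∈ Finset.range (n * m), g (q (m * (j / m + 1))) * (h (q (j + 1)) - h (q j))
  rw [sum_range_mul'' (fun j => g (q (m * (j / m + 1))) * (h (q (j + 1)) - h (q j))) n m]
  unfold RSsum
  refine Finset.sum_congr rfl fun k hk => ?_
  have hdiv : ∀ i ∈ Finset.range m, m * ((k * m + i) / m + 1) = (k + 1) * m := by
    intro i hi
    have : (k * m + i) / m = k := by
      rw [mul_comm k m, Nat.mul_add_div hm, Nat.div_eq_of_lt (Finset.mem_range.mp hi), add_zero]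
    rw [this]; ring
  rw [Finset.sum_congr rfl fun i hi => by rw [hdiv i hi]]
  rw [← Finset.mul_sum]
  have htel := Finset.sum_range_sub (fun i => h (q (k * m + i))) m
  simp only [← Nat.add_assoc] at htel
  rw [htel, show k * m + m = (k + 1) * m by ring, add_zero, hq (k + 1), hq k]
  push_cast
  ring_nf


lemma rs_dist_le (t T : ℝ) (htT : t ≤ T) (g h : ℝ → ℝ)
    (hmono : MonotoneOn h (Set.Icc t T)) {ε' δ : ℝ} (hε' : 0 ≤ ε') (hδ : 0 < δ)
    (hgd : ∀ x ∈ Set.Icc t T, ∀ y ∈ Set.Icc t T, dist x y < δ → dist (g x) (g y) < ε')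
    (n m : ℕ) (hn : 0 < n) (hm : 0 < m)
    (hmesh : (T - t) / n + (T - t) / m < δ) :
    |RSsum t T n g h - RSsum t T m g h| ≤ ε' * (h T - h t) := by
  have hK : 0 < n * m := Nat.mul_pos hn hm
  have hK' : ((n * m : ℕ) : ℝ) ≠ 0 := Nat.cast_ne_zero.mpr hK.ne'
  obtain ⟨q, hqdef⟩ : ∃ q : ℕ → ℝ, ∀ i : ℕ, q i = t + (T - t) * (i : ℝ) / (↑(n * m) : ℝ) :=
    ⟨_, fun _ => rfl⟩
  have hqmem : ∀ i ≤ n * m, q i ∈ Set.Icc t T := fun i hi => by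
    rw [hqdef]; exact mem_p t T htT (n * m) i hi
  have hqmono : ∀ {i i' : ℕ}, i ≤ i' → q i ≤ q i' := fun hii => by
    rw [hqdef, hqdef]; exact p_mono t T htT (n * m) hii
  rw [rs_refine t T g h n m hn hm, rs_refine t T g h m n hm hn,
    show m * n = n * m from Nat.mul_comm m n, ← Finset.sum_sub_distrib]
  simp only [← hqdef]
  have hterm : ∀ j ∈ Finset.range (n * m),
      |g (q (m * (j / m + 1))) * (h (q (j + 1)) - h (q j)) -
        g (q (n * (j / n + 1))) * (h (q (j + 1)) - h (q j))|
      ≤ ε' * (h (q (j + 1)) - h (q j)) := by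
    intro j hj
    have hj' : j < n * m := Finset.mem_range.mp hj
    have hIdx : ∀ a b : ℕ, 0 < b → j < a * b →
        j < b * (j / b + 1) ∧ b * (j / b + 1) ≤ a * b ∧ b * (j / b + 1) ≤ j + b := by
      intro a b hb hab
      have h1 : b * (j / b) + j % b = j := Nat.div_add_mod j b
      have h2 : j % b < b := Nat.mod_lt j hb
      have e1 : b * (j / b + 1) = b * (j / b) + b := by ring
      have h3 : j / b < a := Nat.div_lt_of_lt_mul (by rwa [Nat.mul_comm])
      have h4 : b * (j / b + 1) ≤ b * a := Nat.mul_le_mul_left b h3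
      have h5 : b * a = a * b := Nat.mul_comm b a
      omega
    obtain ⟨hj1, hj2, hj3⟩ := hIdx n m hm hj'
    obtain ⟨hj1', hj2', hj3'⟩ := hIdx m n hn (by rwa [Nat.mul_comm])
    have hτ1mem : q (m * (j / m + 1)) ∈ Set.Icc t T := hqmem _ hj2
    have hτ2mem : q (n * (j / n + 1)) ∈ Set.Icc t T := by
      refine hqmem _ ?_
      rwa [Nat.mul_comm m n] at hj2'
    have hub : ∀ a b : ℕ, a ≤ j + b → q a ≤ q (j + 1) + (T - t) * b / (↑(n * m) : ℝ) := by
      intro a b hab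
      have h1 : q a ≤ q (j + b) := hqmono hab
      have h2 : q (j + b) = q (j + 1) + (T - t) * ((b:ℝ) - 1) / (↑(n * m) : ℝ) := by
        rw [hqdef, hqdef]
        push_cast
        field_simp
        ring
      have h3 : (T - t) * ((b:ℝ) - 1) / (↑(n * m) : ℝ) ≤ (T - t) * (b:ℝ) / (↑(n * m) : ℝ) := by
        gcongr
        · linarith
      linarith
    have hmesh1 : (T - t) * (m:ℝ) / (↑(n * m) : ℝ) = (T - t) / n := by
      have hn' : ((n:ℝ)) ≠ 0 := Nat.cast_ne_zero.mpr hn.ne'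
      have hm' : ((m:ℝ)) ≠ 0 := Nat.cast_ne_zero.mpr hm.ne'
      push_cast
      field_simp
    have hmesh2 : (T - t) * (n:ℝ) / (↑(n * m) : ℝ) = (T - t) / m := by
      have hn' : ((n:ℝ)) ≠ 0 := Nat.cast_ne_zero.mpr hn.ne'
      have hm' : ((m:ℝ)) ≠ 0 := Nat.cast_ne_zero.mpr hm.ne'
      push_cast
      field_simp
    have hub1 : q (m * (j / m + 1)) ≤ q (j + 1) + (T - t) / n := by
      have := hub _ m hj3
      rwa [hmesh1] at this
    have hub2 : q (n * (j / n + 1)) ≤ q (j + 1) + (T - t) / m := by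
      have := hub _ n hj3'
      rwa [hmesh2] at this
    have hlb1 : q (j + 1) ≤ q (m * (j / m + 1)) := hqmono hj1
    have hlb2 : q (j + 1) ≤ q (n * (j / n + 1)) := hqmono hj1'
    have hΔ : 0 ≤ h (q (j + 1)) - h (q j) :=
      sub_nonneg.mpr (hmono (hqmem j (by omega)) (hqmem (j+1) (by omega)) (hqmono (by omega)))
    have hdist : dist (q (m * (j / m + 1))) (q (n * (j / n + 1))) < δ := by
      rw [Real.dist_eq, abs_sub_lt_iff]
      have hTn : 0 ≤ (T - t) / (n:ℝ) := div_nonneg (by linarith) (Nat.cast_nonneg n)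
      have hTm : 0 ≤ (T - t) / (m:ℝ) := div_nonneg (by linarith) (Nat.cast_nonneg m)
      constructor <;> linarith
    have hg' : |g (q (m * (j / m + 1))) - g (q (n * (j / n + 1)))| ≤ ε' :=
      le_of_lt (by rw [← Real.dist_eq]; exact hgd _ hτ1mem _ hτ2mem hdist)
    calc |g (q (m * (j / m + 1))) * (h (q (j + 1)) - h (q j)) -
          g (q (n * (j / n + 1))) * (h (q (j + 1)) - h (q j))|
        = |g (q (m * (j / m + 1))) - g (q (n * (j / n + 1)))| * (h (q (j + 1)) - h (q j)) := by
          rw [← sub_mul, abs_mul, abs_of_nonneg hΔ]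
      _ ≤ ε' * (h (q (j + 1)) - h (q j)) := by
          exact mul_le_mul_of_nonneg_right hg' hΔ
  calc |∑ j ∈ Finset.range (n * m),
        (g (q (m * (j / m + 1))) * (h (q (j + 1)) - h (q j)) -
          g (q (n * (j / n + 1))) * (h (q (j + 1)) - h (q j)))|
      ≤ ∑ j ∈ Finset.range (n * m),
        |g (q (m * (j / m + 1))) * (h (q (j + 1)) - h (q j)) -
          g (q (n * (j / n + 1))) * (h (q (j + 1)) - h (q j))| :=
        Finset.abs_sum_le_sum_abs _ _
    _ ≤ ∑ j ∈ Finset.range (n * m), ε' * (h (q (j + 1)) - h (q j)) :=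
        Finset.sum_le_sum hterm
    _ = ε' * (h (q (n * m)) - h (q 0)) := by
        rw [← Finset.mul_sum]
        congr 1
        have htel := Finset.sum_range_sub (fun i => h (q i)) (n * m)
        simpa using htel
    _ = ε' * (h T - h t) := by
        have hq0 : q 0 = t := by rw [hqdef]; simp
        have hqK : q (n * m) = T := by
          rw [hqdef]
          field_simp
          ring
        rw [hq0, hqK]

lemma exists_rs_tendsto (t T : ℝ) (htT : t ≤ T) (g h : ℝ → ℝ)
    (hg : ContinuousOn g (Set.Icc t T)) (hmono : MonotoneOn h (Set.Icc t T)) :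
    ∃ I : ℝ, Tendsto (fun n => RSsum t T n g h) atTop (nhds I) := by
  apply cauchySeq_tendsto_of_complete
  rw [Metric.cauchySeq_iff']
  intro ε hε
  have htmem : t ∈ Set.Icc t T := Set.left_mem_Icc.mpr htT
  have hTmem : T ∈ Set.Icc t T := Set.right_mem_Icc.mpr htT
  have hV : 0 ≤ h T - h t := sub_nonneg.mpr (hmono htmem hTmem htT)
  set ε' := ε / (2 * (h T - h t + 1)) with hε'def
  have hε'pos : 0 < ε' := by positivity
  have hu := isCompact_Icc.uniformContinuousOn_of_continuous hg
  rw [Metric.uniformContinuousOn_iff] at hu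
  obtain ⟨δ, hδ, hgd⟩ := hu ε' hε'pos
  obtain ⟨N0, hN0⟩ := exists_nat_gt (4 * (T - t) / δ)
  set N := max N0 1 with hNdef
  refine ⟨N, fun n hn => ?_⟩
  have hN1 : 1 ≤ N := le_max_right _ _
  have hn1 : 1 ≤ n := le_trans hN1 hn
  have hNpos : (0:ℝ) < N := by exact_mod_cast hN1
  have hnpos : (0:ℝ) < n := by exact_mod_cast hn1
  have hNN : 4 * (T - t) < δ * N := by
    have h4 : 4 * (T - t) / δ < (N:ℝ) := by
      refine lt_of_lt_of_le hN0 ?_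
      exact_mod_cast le_max_left N0 1
    rw [div_lt_iff₀ hδ] at h4
    linarith
  have hmesh : (T - t) / n + (T - t) / N < δ := by
    have h1 : (T - t) / (n:ℝ) ≤ (T - t) / (N:ℝ) := by
      gcongr <;> first | linarith | exact_mod_cast hn
    have h2 : (T - t) / (N:ℝ) < δ / 2 := by
      rw [div_lt_iff₀ hNpos]
      nlinarith [sub_nonneg.mpr htT]
    linarith
  have hkey := rs_dist_le t T htT g h hmono hε'pos.le hδ hgd n N
    (by exact_mod_cast hn1) (by exact_mod_cast hN1) hmesh
  rw [Real.dist_eq]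
  calc |RSsum t T n g h - RSsum t T N g h| ≤ ε' * (h T - h t) := hkey
    _ < ε := by
      rw [hε'def]
      rw [div_mul_eq_mul_div, div_lt_iff₀ (by linarith)]
      nlinarith


lemma rs_neg (t T : ℝ) (n : ℕ) (g h : ℝ → ℝ) :
    RSsum t T n g (fun s => -h s) = -RSsum t T n g h := by
  unfold RSsum
  rw [← Finset.sum_neg_distrib]
  exact Finset.sum_congr rfl fun k _ => by ring


lemma rs_abs_le (t T : ℝ) (htT : t ≤ T) (g h : ℝ → ℝ)
    (hmono : MonotoneOn h (Set.Icc t T)) (C : ℝ)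
    (hC : ∀ s ∈ Set.Icc t T, |g s| ≤ C) (n : ℕ) :
    |RSsum t T n g h| ≤ C * (h T - h t) := by
  have htmem : t ∈ Set.Icc t T := Set.left_mem_Icc.mpr htT
  have hTmem : T ∈ Set.Icc t T := Set.right_mem_Icc.mpr htT
  have hV : 0 ≤ h T - h t := sub_nonneg.mpr (hmono htmem hTmem htT)
  have hC0 : 0 ≤ C := le_trans (abs_nonneg _) (hC t htmem)
  rcases Nat.eq_zero_or_pos n with h0 | hn
  · subst h0
    simp only [RSsum, Finset.range_zero, Finset.sum_empty, abs_zero]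
    positivity
  · have hn' : ((n:ℝ)) ≠ 0 := by positivity
    unfold RSsum
    calc |∑ k ∈ Finset.range n, g (t + (T - t) * (k + 1) / n) *
          (h (t + (T - t) * (k + 1) / n) - h (t + (T - t) * k / n))|
        ≤ ∑ k ∈ Finset.range n, |g (t + (T - t) * (k + 1) / n) *
          (h (t + (T - t) * (k + 1) / n) - h (t + (T - t) * k / n))| :=
          Finset.abs_sum_le_sum_abs _ _
      _ ≤ ∑ k ∈ Finset.range n, C *
          (h (t + (T - t) * (k + 1) / n) - h (t + (T - t) * k / n)) := by
          refine Finset.sum_le_sum fun k hk => ?_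
          have hk' : k < n := Finset.mem_range.mp hk
          have hm1 : t + (T - t) * (k:ℝ) / n ∈ Set.Icc t T := mem_p t T htT n k hk'.le
          have hm2 : t + (T - t) * ((k:ℝ) + 1) / n ∈ Set.Icc t T := by
            have := mem_p t T htT n (k + 1) hk'
            push_cast at this
            exact this
          have hle : t + (T - t) * (k:ℝ) / n ≤ t + (T - t) * ((k:ℝ) + 1) / n := by
            have := p_mono t T htT n (Nat.le_succ k)
            push_cast at this
            exact this
          have hΔ : 0 ≤ h (t + (T - t) * ((k:ℝ) + 1) / n) - h (t + (T - t) * (k:ℝ) / n) :=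
            sub_nonneg.mpr (hmono hm1 hm2 hle)
          rw [abs_mul, abs_of_nonneg hΔ]
          exact mul_le_mul_of_nonneg_right (hC _ hm2) hΔ
      _ = C * (h T - h t) := by
          rw [← Finset.mul_sum]
          congr 1
          have htel := Finset.sum_range_sub (fun k => h (t + (T - t) * (k:ℝ) / n)) n
          have e1 : ∀ k : ℕ, ((k:ℝ) + 1) = ((k + 1 : ℕ) : ℝ) := by intro k; push_cast; ring
          calc ∑ k ∈ Finset.range n, (h (t + (T - t) * ((k:ℝ) + 1) / n) -
                h (t + (T - t) * (k:ℝ) / n))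
              = ∑ k ∈ Finset.range n, (h (t + (T - t) * ((k + 1 : ℕ):ℝ) / n) -
                h (t + (T - t) * (k:ℝ) / n)) := by
                refine Finset.sum_congr rfl fun k _ => by rw [e1 k]
            _ = h (t + (T - t) * (n:ℝ) / n) - h (t + (T - t) * (0:ℕ) / n) := htel
            _ = h T - h t := by
                rw [show t + (T - t) * (n:ℝ) / n = T by field_simp; ring]
                norm_num


lemma cube_bound (a E R : ℝ) (ha : 0 ≤ a) (hE : 1 ≤ E) (hR : R ≤ a * (E + 1)) :
    R ≤ a ^ 3 + 8 * E ^ 3 + 1 := by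
  have h1 : a * (E + 1) ≤ a ^ 3 + (E + 1) ^ 3 + 1 := by
    nlinarith [mul_nonneg (by linarith : (0:ℝ) ≤ a + (E + 1) + 1)
      (by positivity : (0:ℝ) ≤ (a - (E + 1)) ^ 2 + (a - 1) ^ 2 + (E + 1 - 1) ^ 2),
      sq_nonneg (a - (E + 1)), sq_nonneg (a + E)]
  have e1 : 1 ≤ E ^ 3 := by
    nlinarith [mul_nonneg (sub_nonneg.mpr hE) (by nlinarith [sq_nonneg E] : (0:ℝ) ≤ E ^ 2 + E + 1)]
  have e2 : E ≤ E ^ 3 := by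
    nlinarith [mul_nonneg (mul_nonneg (by linarith : (0:ℝ) ≤ E) (by linarith : (0:ℝ) ≤ E - 1))
      (by linarith : (0:ℝ) ≤ E + 1)]
  have e3 : E ^ 2 ≤ E ^ 3 := by
    nlinarith [mul_nonneg (sq_nonneg E) (by linarith : (0:ℝ) ≤ E - 1)]
  nlinarith [e1, e2, e3]


end RSaux

open RSaux

theorem stmt8 {Ω : Type*} [MeasurableSpace Ω] (P : Measure Ω) [IsProbabilityMeasure P]
    (t T c : ℝ) (htT : t ≤ T) (hc : c ≠ 0)
    (L Y : ℝ → Ω → ℝ)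
    (hLmeas : ∀ s, Measurable (L s)) (hYmeas : ∀ s, Measurable (Y s))
    (hLcont : ∀ ω, ContinuousOn (fun s => L s ω) (Set.Icc t T))
    (hLmono : ∀ ω, MonotoneOn (fun s => L s ω) (Set.Icc t T))
    (hLt : ∀ ω, L t ω = 0)
    (hL0 : ∀ s ω, 0 ≤ L s ω)
    (hYcont : ∀ ω, ContinuousOn (fun s => Y s ω) (Set.Icc t T))
    -- the σ-algebras generated by (L_s)_{s∈[t,T]} and (Y_s)_{s∈[t,T]} are independent
    (hInd : IndepFun (fun ω => fun s : Set.Icc t T => L s ω)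
      (fun ω => fun s : Set.Icc t T => Y s ω) P)
    (hLint : Integrable (fun ω => Real.exp (3 * |c| * L T ω)) P)
    (hYint : Integrable (fun ω => (⨆ s : Set.Icc t T, |Y s ω|) ^ 3) P) :
    -- E[∫_t^T Y_s d(e^{c L_s})] = ∫_t^T E[Y_s] d(E[e^{c L_s}]), both Stieltjes integrals
    -- realized as limits of Riemann–Stieltjes sums
    ∃ J : Ω → ℝ,
      (∀ ω, Tendsto
        (fun n => RSsum t T n (fun s => Y s ω) (fun s => Real.exp (c * L s ω)))
        atTop (nhds (J ω))) ∧
      Tendsto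
        (fun n => RSsum t T n (fun s => ∫ ω, Y s ω ∂P)
          (fun s => ∫ ω, Real.exp (c * L s ω) ∂P))
        atTop (nhds (∫ ω, J ω ∂P)) := by
  have htmem : t ∈ Set.Icc t T := Set.left_mem_Icc.mpr htT
  have hTmem : T ∈ Set.Icc t T := Set.right_mem_Icc.mpr htT
  -- basic facts about e^{cL}
  have hLT0 : ∀ ω, 0 ≤ L T ω := fun ω => hL0 T ω
  have hLle : ∀ s ∈ Set.Icc t T, ∀ ω, L s ω ≤ L T ω := fun s hs ω =>
    hLmono ω hs hTmem hs.2
  have hexp_le : ∀ s ∈ Set.Icc t T, ∀ ω,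
      Real.exp (c * L s ω) ≤ Real.exp (3 * |c| * L T ω) := by
    intro s hs ω
    apply Real.exp_le_exp.mpr
    have h1 : c * L s ω ≤ |c| * L s ω :=
      mul_le_mul_of_nonneg_right (le_abs_self c) (hL0 s ω)
    have h2 : |c| * L s ω ≤ |c| * L T ω :=
      mul_le_mul_of_nonneg_left (hLle s hs ω) (abs_nonneg c)
    nlinarith [abs_nonneg c, hLT0 ω]
  -- sup of |Y| along the path
  have hbdd : ∀ ω, BddAbove (Set.range fun s : Set.Icc t T => |Y (↑s) ω|) := by
    intro ω
    have h1 : ContinuousOn (fun s => |Y s ω|) (Set.Icc t T) := (hYcont ω).abs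
    have h2 : BddAbove ((fun s => |Y s ω|) '' Set.Icc t T) :=
      (isCompact_Icc.image_of_continuousOn h1).bddAbove
    have h3 : (Set.range fun s : Set.Icc t T => |Y (↑s) ω|)
        = (fun s => |Y s ω|) '' Set.Icc t T := by
      rw [show (fun s : Set.Icc t T => |Y (↑s) ω|)
          = (fun s => |Y s ω|) ∘ Subtype.val from rfl, Set.range_comp, Subtype.range_coe]
    rwa [h3]
  have hle_sup : ∀ s ∈ Set.Icc t T, ∀ ω, |Y s ω| ≤ ⨆ s : Set.Icc t T, |Y (↑s) ω| := by
    intro s hs ω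
    exact le_ciSup (hbdd ω) ⟨s, hs⟩
  have hsup0 : ∀ ω, 0 ≤ ⨆ s : Set.Icc t T, |Y (↑s) ω| := fun ω =>
    le_trans (abs_nonneg _) (hle_sup t htmem ω)
  -- integrability facts
  have hE3int : Integrable (fun ω => Real.exp (3 * |c| * L T ω)) P := hLint
  have hYs_int : ∀ s ∈ Set.Icc t T, Integrable (fun ω => Y s ω) P := by
    intro s hs
    refine Integrable.mono' (hYint.add (integrable_const 1)) ((hYmeas s).aestronglyMeasurable)
      (Filter.Eventually.of_forall fun ω => ?_)
    have h1 := hle_sup s hs ω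
    have h2 := hsup0 ω
    have h3 : (⨆ s : Set.Icc t T, |Y (↑s) ω|) ≤ (⨆ s : Set.Icc t T, |Y (↑s) ω|) ^ 3 + 1 := by
      nlinarith [h2, sq_nonneg ((⨆ s : Set.Icc t T, |Y (↑s) ω|) - 1),
        mul_nonneg h2 (sq_nonneg ((⨆ s : Set.Icc t T, |Y (↑s) ω|) - 1)),
        sq_nonneg (⨆ s : Set.Icc t T, |Y (↑s) ω|)]
    calc ‖Y s ω‖ = |Y s ω| := rfl
      _ ≤ _ := le_trans h1 h3
  have hexp_int : ∀ s ∈ Set.Icc t T, Integrable (fun ω => Real.exp (c * L s ω)) P := by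
    intro s hs
    refine Integrable.mono' hLint (((hLmeas s).const_mul c).exp.aestronglyMeasurable)
      (Filter.Eventually.of_forall fun ω => ?_)
    rw [Real.norm_eq_abs, abs_of_pos (Real.exp_pos _)]
    exact hexp_le s hs ω
  -- independence of Y s and increments of e^{cL}
  have hIndST : ∀ s ∈ Set.Icc t T, ∀ s' ∈ Set.Icc t T, ∀ s'' ∈ Set.Icc t T,
      IndepFun (fun ω => Y s ω)
        (fun ω => Real.exp (c * L s' ω) - Real.exp (c * L s'' ω)) P := by
    intro s hs s' hs' s'' hs''
    have hφ : Measurable fun f : Set.Icc t T → ℝ =>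
        Real.exp (c * f ⟨s', hs'⟩) - Real.exp (c * f ⟨s'', hs''⟩) :=
      (((measurable_pi_apply _ : Measurable fun f : Set.Icc t T → ℝ => f ⟨s', hs'⟩).const_mul c).exp).sub
        (((measurable_pi_apply _ : Measurable fun f : Set.Icc t T → ℝ => f ⟨s'', hs''⟩).const_mul c).exp)
    have hψ : Measurable fun f : Set.Icc t T → ℝ => f ⟨s, hs⟩ := measurable_pi_apply _
    exact (hInd.comp hφ hψ).symm
  -- expectation of Riemann–Stieltjes sums factorizes
  have hswap : ∀ n : ℕ,
      RSsum t T n (fun s => ∫ ω, Y s ω ∂P) (fun s => ∫ ω, Real.exp (c * L s ω) ∂P)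
        = ∫ ω, RSsum t T n (fun s => Y s ω) (fun s => Real.exp (c * L s ω)) ∂P := by
    intro n
    unfold RSsum
    rw [integral_finset_sum]
    · refine Finset.sum_congr rfl fun k hk => ?_
      have hk' : k < n := Finset.mem_range.mp hk
      have hm1 : t + (T - t) * (k:ℝ) / n ∈ Set.Icc t T := mem_p t T htT n k hk'.le
      have hm2 : t + (T - t) * ((k:ℝ) + 1) / n ∈ Set.Icc t T := by
        have := mem_p t T htT n (k + 1) hk'
        push_cast at this
        exact this
      have hindep := hIndST _ hm2 _ hm2 _ hm1
      have heq : ∫ ω, Y (t + (T - t) * ((k:ℝ) + 1) / n) ω *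
            (Real.exp (c * L (t + (T - t) * ((k:ℝ) + 1) / n) ω) -
              Real.exp (c * L (t + (T - t) * (k:ℝ) / n) ω)) ∂P
          = (∫ ω, Y (t + (T - t) * ((k:ℝ) + 1) / n) ω ∂P) *
            ∫ ω, (Real.exp (c * L (t + (T - t) * ((k:ℝ) + 1) / n) ω) -
              Real.exp (c * L (t + (T - t) * (k:ℝ) / n) ω)) ∂P :=
        hindep.integral_mul_eq_mul_integral (hYmeas _).aestronglyMeasurable
          ((((hLmeas _).const_mul c).exp.sub ((hLmeas _).const_mul c).exp).aestronglyMeasurable)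
      simp only []
      rw [← integral_sub (hexp_int _ hm2) (hexp_int _ hm1)]
      exact heq.symm
    · intro k hk
      have hk' : k < n := Finset.mem_range.mp hk
      have hm1 : t + (T - t) * (k:ℝ) / n ∈ Set.Icc t T := mem_p t T htT n k hk'.le
      have hm2 : t + (T - t) * ((k:ℝ) + 1) / n ∈ Set.Icc t T := by
        have := mem_p t T htT n (k + 1) hk'
        push_cast at this
        exact this
      exact (hIndST _ hm2 _ hm2 _ hm1).integrable_mul (hYs_int _ hm2)
        ((hexp_int _ hm2).sub (hexp_int _ hm1))
  -- monotonicity of the integrator (up to sign)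
  have hmonoe : ∀ ω, 0 ≤ c → MonotoneOn (fun s => Real.exp (c * L s ω)) (Set.Icc t T) := by
    intro ω hc0 a ha b hb hab
    exact Real.exp_le_exp.mpr (mul_le_mul_of_nonneg_left (hLmono ω ha hb hab) hc0)
  have hmonoe' : ∀ ω, c < 0 → MonotoneOn (fun s => -Real.exp (c * L s ω)) (Set.Icc t T) := by
    intro ω hc0 a ha b hb hab
    simp only [neg_le_neg_iff]
    exact Real.exp_le_exp.mpr (mul_le_mul_of_nonpos_left (hLmono ω ha hb hab) hc0.le)
  -- pathwise convergence of the Riemann–Stieltjes sums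
  have hconv : ∀ ω, ∃ I : ℝ, Tendsto
      (fun n => RSsum t T n (fun s => Y s ω) (fun s => Real.exp (c * L s ω)))
      atTop (nhds I) := by
    intro ω
    rcases le_or_gt 0 c with hc0 | hc0
    · exact exists_rs_tendsto t T htT _ _ (hYcont ω) (hmonoe ω hc0)
    · obtain ⟨I, hI⟩ := exists_rs_tendsto t T htT (fun s => Y s ω)
        (fun s => -Real.exp (c * L s ω)) (hYcont ω) (hmonoe' ω hc0)
      refine ⟨-I, ?_⟩
      have h2 : ∀ n : ℕ, RSsum t T n (fun s => Y s ω) (fun s => Real.exp (c * L s ω))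
          = -(RSsum t T n (fun s => Y s ω) (fun s => -Real.exp (c * L s ω))) := by
        intro n
        rw [rs_neg t T n (fun s => Y s ω) (fun s => Real.exp (c * L s ω)), neg_neg]
      simp only [h2]
      exact hI.neg
  choose J hJ using hconv
  refine ⟨J, hJ, ?_⟩
  -- the dominating function
  have hEge1 : ∀ ω, 1 ≤ Real.exp (|c| * L T ω) := fun ω =>
    Real.one_le_exp (mul_nonneg (abs_nonneg c) (hLT0 ω))
  have hE3 : ∀ ω, Real.exp (|c| * L T ω) ^ 3 = Real.exp (3 * |c| * L T ω) := by
    intro ω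
    rw [← Real.exp_nat_mul]
    push_cast
    ring_nf
  have hRSle : ∀ (n : ℕ) ω, |RSsum t T n (fun s => Y s ω) (fun s => Real.exp (c * L s ω))|
      ≤ (⨆ s : Set.Icc t T, |Y (↑s) ω|) * (Real.exp (|c| * L T ω) + 1) := by
    intro n ω
    have hC : ∀ s ∈ Set.Icc t T, |(fun s => Y s ω) s| ≤ ⨆ s : Set.Icc t T, |Y (↑s) ω| :=
      fun s hs => hle_sup s hs ω
    have hcle : Real.exp (c * L T ω) ≤ Real.exp (|c| * L T ω) :=
      Real.exp_le_exp.mpr (mul_le_mul_of_nonneg_right (le_abs_self c) (hLT0 ω))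
    rcases le_or_gt 0 c with hc0 | hc0
    · have h1 := rs_abs_le t T htT _ _ (hmonoe ω hc0) _ hC n
      have h2 : Real.exp (c * L t ω) = 1 := by rw [hLt ω, mul_zero, Real.exp_zero]
      rw [h2] at h1
      refine le_trans h1 ?_
      apply mul_le_mul_of_nonneg_left ?_ (hsup0 ω)
      linarith
    · have h1 := rs_abs_le t T htT _ _ (hmonoe' ω hc0) _ hC n
      rw [rs_neg t T n (fun s => Y s ω) (fun s => Real.exp (c * L s ω)), abs_neg] at h1
      have h2 : Real.exp (c * L t ω) = 1 := by rw [hLt ω, mul_zero, Real.exp_zero]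
      rw [h2] at h1
      refine le_trans h1 ?_
      apply mul_le_mul_of_nonneg_left ?_ (hsup0 ω)
      have := Real.exp_pos (c * L T ω)
      linarith
  have hbound : ∀ (n : ℕ) ω, |RSsum t T n (fun s => Y s ω) (fun s => Real.exp (c * L s ω))|
      ≤ (⨆ s : Set.Icc t T, |Y (↑s) ω|) ^ 3 + 8 * Real.exp (3 * |c| * L T ω) + 1 := by
    intro n ω
    have := cube_bound (⨆ s : Set.Icc t T, |Y (↑s) ω|) (Real.exp (|c| * L T ω))
      (|RSsum t T n (fun s => Y s ω) (fun s => Real.exp (c * L s ω))|)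
      (hsup0 ω) (hEge1 ω) (hRSle n ω)
    rwa [hE3 ω] at this
  -- measurability of the sums
  have hFmeas : ∀ n : ℕ, AEStronglyMeasurable
      (fun ω => RSsum t T n (fun s => Y s ω) (fun s => Real.exp (c * L s ω))) P := by
    intro n
    apply Measurable.aestronglyMeasurable
    unfold RSsum
    apply Finset.measurable_sum
    intro k _
    exact (hYmeas _).mul ((((hLmeas _).const_mul c).exp).sub (((hLmeas _).const_mul c).exp))
  have hbint : Integrable (fun ω => (⨆ s : Set.Icc t T, |Y (↑s) ω|) ^ 3
      + 8 * Real.exp (3 * |c| * L T ω) + 1) P :=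
    (hYint.add (hLint.const_mul 8)).add (integrable_const 1)
  have hDCT := tendsto_integral_of_dominated_convergence
    (μ := P)
    (F := fun n ω => RSsum t T n (fun s => Y s ω) (fun s => Real.exp (c * L s ω)))
    (f := J)
    (fun ω => (⨆ s : Set.Icc t T, |Y (↑s) ω|) ^ 3 + 8 * Real.exp (3 * |c| * L T ω) + 1)
    hFmeas hbint
    (fun n => Filter.Eventually.of_forall fun ω => by
      rw [Real.norm_eq_abs]; exact hbound n ω)
    (Filter.Eventually.of_forall hJ)
  simp only [hswap]
  exact hDCT
end
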